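/- Let φ be an LRV formula over variables x_1, …, x_k whose atomic formulas are of the forms x_i ≈ X^ℓ x_j, x_i ≉ X^ℓ x_j and ⟨x_i ≈ x_j? ⊤⟩, and let k' = 2k+1. Using a single variable x, define: segment-k' = ⋀_{0≤j≤k'−1, j even} x ≈ X^j x ∧ ⋀_{0≤j≤k'−1, j odd} x ≉ X^j x ∧ (¬X^{k'}⊤ ∨ x ≈ X^{k'} x); many-segments = segment-k' ∧ G((x ≈ X x) ⇒ X segment-k'); γ_j = (X^{k'−2j} x ≈ X^{k'−2j+1} x) ∨ (X^{k'−2j}⊤ ∧ ¬X^{k'−2j+1}⊤) for each j ∈ {1,…,k}; and ξ_{i,j} = X^{2i−1}⟨x ≈ x? γ_j⟩. Define the translation tr by: tr is homomorphic on Boolean connectives; tr(X ψ) = X^{k'} tr(ψ); tr(X⁻¹ ψ) = (X⁻¹)^{k'} tr(ψ); tr(ψ U ψ') = (segment-k' ⇒ tr(ψ)) U (segment-k' ∧ tr(ψ')); tr(ψ S ψ') = (segment-k' ⇒ tr(ψ)) S (segment-k' ∧ tr(ψ')); tr(x_i ≈ X^ℓ x_j) = X^{2i−1} x ≈ X^{ℓ·k'+2j−1}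 x and tr(x_i ≉ X^ℓ x_j) is its negation conjoined with X^{ℓ·k'+2j−1}⊤; tr(⟨x_i ≈ x_j? ⊤⟩) = (tr(x_i ≈ x_j) ∧ ξ_{j,j}) ∨ (tr(x_i ≉ x_j) ∧ ξ_{i,j}). Then φ is satisfiable if and only if the one-variable LRV formula many-segments ∧ tr(φ) is satisfiable. -/

import Mathlib

/-- Syntax of LRV formulas.  Variables are natural numbers.
`eqX x j y` is the atomic formula `x ≈ X^j y`,
`futEq x y φ` is the future obligation `⟨x ≈ y? φ⟩`,
`futNeq x y φ` is `⟨x ≉ y? φ⟩`;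
`untl` is "until" (U), `prev` is `X⁻¹`, `sinc` is "since" (S). -/
inductive LRV : Type
  | eqX : ℕ → ℕ → ℕ → LRV
  | futEq : ℕ → ℕ → LRV → LRV
  | futNeq : ℕ → ℕ → LRV → LRV
  | and : LRV → LRV → LRV
  | not : LRV → LRV
  | next : LRV → LRV
  | untl : LRV → LRV → LRV
  | prev : LRV → LRV
  | sinc : LRV → LRV → LRV
  deriving DecidableEq

/-- A model is a finite (intended: non-empty) sequence of valuations. -/
abbrev LRVModel := List (ℕ → ℕ)

/-- The valuation of a model at position `i`. -/
def mval (σ : LRVModel) (i : ℕ) : ℕ → ℕ := σ.getD i (fun _ => 0)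

/-- Satisfaction relation `σ, i ⊨ φ` for LRV over finite models. -/
def LRVSat (σ : LRVModel) : LRV → ℕ → Prop
  | .eqX x j y, i => i + j < σ.length ∧ mval σ i x = mval σ (i + j) y
  | .futEq x y φ, i => ∃ j, i < j ∧ j < σ.length ∧ mval σ i x = mval σ j y ∧ LRVSat σ φ j
  | .futNeq x y φ, i => ∃ j, i < j ∧ j < σ.length ∧ mval σ i x ≠ mval σ j y ∧ LRVSat σ φ j
  | .and φ ψ, i => LRVSat σ φ i ∧ LRVSat σ ψ i
  | .not φ, i => ¬ LRVSat σ φ i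
  | .next φ, i => i + 1 < σ.length ∧ LRVSat σ φ (i + 1)
  | .untl φ ψ, i => ∃ j, i ≤ j ∧ j < σ.length ∧ LRVSat σ ψ j ∧ ∀ l, i ≤ l → l < j → LRVSat σ φ l
  | .prev φ, i => 0 < i ∧ LRVSat σ φ (i - 1)
  | .sinc φ ψ, i => ∃ j, j ≤ i ∧ LRVSat σ ψ j ∧ ∀ l, j < l → l ≤ i → LRVSat σ φ l

/-- Satisfiability: truth at position 0 in some non-empty model. -/
def LRVSatisfiable (φ : LRV) : Prop := ∃ σ : LRVModel, σ ≠ [] ∧ LRVSat σ φ 0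

/-- ⊤ (true at every position of a model). -/
def LRV.top : LRV := .eqX 0 0 0

/-- Disjunction (derived). -/
def LRV.lor (φ ψ : LRV) : LRV := .not (.and (.not φ) (.not ψ))

/-- Implication (derived). -/
def LRV.limp (φ ψ : LRV) : LRV := LRV.lor (.not φ) ψ

/-- Bi-implication (derived). -/
def LRV.liff (φ ψ : LRV) : LRV := .and (LRV.limp φ ψ) (LRV.limp ψ φ)

/-- F (eventually, at the current or a later position). -/
def LRV.evF (φ : LRV) : LRV := .untl LRV.top φ

/-- G (always, from the current position on). -/
def LRV.alG (φ : LRV) : LRV := .not (LRV.evF (.not φ))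

/-- Iterated next `X^n`. -/
def LRV.nextn : ℕ → LRV → LRV
  | 0, φ => φ
  | n + 1, φ => .next (LRV.nextn n φ)

/-- Iterated previous `(X⁻¹)^n`. -/
def LRV.prevn : ℕ → LRV → LRV
  | 0, φ => φ
  | n + 1, φ => .prev (LRV.prevn n φ)

/-- `x ≉ X^j y`, i.e. `¬(x ≈ X^j y) ∧ X^j ⊤`. -/
def LRV.neqX (x j y : ℕ) : LRV := .and (.not (.eqX x j y)) (LRV.nextn j LRV.top)

/-- Finite conjunction. -/
def lrvBigAnd (l : List LRV) : LRV := l.foldr .and LRV.top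

/-- Finite disjunction. -/
def lrvBigOr (l : List LRV) : LRV := l.foldr LRV.lor (.not LRV.top)

/-- Source syntax: LRV formulas over the variables `x_1, …, x_k` whose atomic formulas are of
the forms `x_i ≈ X^ℓ x_j`, `x_i ≉ X^ℓ x_j` and `⟨x_i ≈ x_j? ⊤⟩` (the index `i : Fin k`
stands for the variable `x_{i+1}`). -/
inductive SrcF (k : ℕ) : Type
  | eq : Fin k → ℕ → Fin k → SrcF k      -- x_i ≈ X^ℓ x_j
  | neq : Fin k → ℕ → Fin k → SrcF k     -- x_i ≉ X^ℓ x_j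
  | oblig : Fin k → Fin k → SrcF k       -- ⟨x_i ≈ x_j? ⊤⟩
  | and : SrcF k → SrcF k → SrcF k
  | not : SrcF k → SrcF k
  | next : SrcF k → SrcF k
  | prev : SrcF k → SrcF k
  | untl : SrcF k → SrcF k → SrcF k
  | sinc : SrcF k → SrcF k → SrcF k

/-- The source formula read as an LRV formula (variable `x_{i+1}` is the LRV variable `i`). -/
def SrcF.toLRV {k : ℕ} : SrcF k → LRV
  | .eq i l j => .eqX (i : ℕ) l (j : ℕ)
  | .neq i l j => LRV.neqX (i : ℕ) l (j : ℕ)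
  | .oblig i j => .futEq (i : ℕ) (j : ℕ) LRV.top
  | .and a b => .and a.toLRV b.toLRV
  | .not a => .not a.toLRV
  | .next a => .next a.toLRV
  | .prev a => .prev a.toLRV
  | .untl a b => .untl a.toLRV b.toLRV
  | .sinc a b => .sinc a.toLRV b.toLRV

/-- `X^a x ≈ X^b x` (for the single variable `x`, which is variable `0`):
abbreviates `X^{min a b}(x ≈ X^{max a b − min a b} x)`. -/
def eqAt (a b : ℕ) : LRV := LRV.nextn (min a b) (.eqX 0 (max a b - min a b) 0)

/-- `segment-k' = ⋀_{0≤j≤k'−1, j even} x ≈ X^j x ∧ ⋀_{0≤j≤k'−1, j odd} x ≉ X^j x ∧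
(¬X^{k'}⊤ ∨ x ≈ X^{k'} x)`, where `k' = 2k+1`. -/
def segF (k : ℕ) : LRV :=
  .and (lrvBigAnd ((List.range (2 * k + 1)).map
          (fun j => if j % 2 = 0 then LRV.eqX 0 j 0 else LRV.neqX 0 j 0)))
       (LRV.lor (.not (LRV.nextn (2 * k + 1) LRV.top)) (.eqX 0 (2 * k + 1) 0))

/-- `many-segments = segment-k' ∧ G((x ≈ X x) ⇒ X segment-k')`. -/
def manySegF (k : ℕ) : LRV :=
  .and (segF k) (LRV.alG (LRV.limp (.eqX 0 1 0) (.next (segF k))))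

/-- `γ_j = (X^{k'−2j} x ≈ X^{k'−2j+1} x) ∨ (X^{k'−2j}⊤ ∧ ¬X^{k'−2j+1}⊤)` (j is 1-based). -/
def gamF (k j : ℕ) : LRV :=
  LRV.lor (LRV.nextn (2 * k + 1 - 2 * j) (.eqX 0 1 0))
          (.and (LRV.nextn (2 * k + 1 - 2 * j) LRV.top)
                (.not (LRV.nextn (2 * k + 1 - 2 * j + 1) LRV.top)))

/-- `ξ_{i,j} = X^{2i−1}⟨x ≈ x? γ_j⟩` (i and j are 1-based). -/
def xiF (k i j : ℕ) : LRV := LRV.nextn (2 * i - 1) (.futEq 0 0 (gamF k j))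

/-- The translation `tr` into one-variable LRV formulas. -/
def trOne {k : ℕ} : SrcF k → LRV
  | .eq i l j => eqAt (2 * (i : ℕ) + 1) (l * (2 * k + 1) + 2 * (j : ℕ) + 1)
  | .neq i l j =>
      .and (.not (eqAt (2 * (i : ℕ) + 1) (l * (2 * k + 1) + 2 * (j : ℕ) + 1)))
           (LRV.nextn (l * (2 * k + 1) + 2 * (j : ℕ) + 1) LRV.top)
  | .oblig i j =>
      LRV.lor
        (.and (eqAt (2 * (i : ℕ) + 1) (2 * (j : ℕ) + 1)) (xiF k ((j : ℕ) + 1) ((j : ℕ) + 1)))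
        (.and (.and (.not (eqAt (2 * (i : ℕ) + 1) (2 * (j : ℕ) + 1)))
                    (LRV.nextn (2 * (j : ℕ) + 1) LRV.top))
              (xiF k ((i : ℕ) + 1) ((j : ℕ) + 1)))
  | .and a b => .and (trOne a) (trOne b)
  | .not a => .not (trOne a)
  | .next a => LRV.nextn (2 * k + 1) (trOne a)
  | .prev a => LRV.prevn (2 * k + 1) (trOne a)
  | .untl a b => .untl (LRV.limp (segF k) (trOne a)) (.and (segF k) (trOne b))
  | .sinc a b => .sinc (LRV.limp (segF k) (trOne a)) (.and (segF k) (trOne b))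

section Aux

variable {σ : LRVModel}

lemma sat_top {p : ℕ} : LRVSat σ LRV.top p ↔ p < σ.length := by
  simp [LRV.top, LRVSat]

lemma sat_lor {a b : LRV} {p : ℕ} :
    LRVSat σ (LRV.lor a b) p ↔ LRVSat σ a p ∨ LRVSat σ b p := by
  simp only [LRV.lor, LRVSat]; tauto

lemma sat_limp {a b : LRV} {p : ℕ} :
    LRVSat σ (LRV.limp a b) p ↔ (LRVSat σ a p → LRVSat σ b p) := by
  simp only [LRV.limp, sat_lor, LRVSat]; tauto

lemma sat_nextn_pos {ψ : LRV} : ∀ n, 0 < n → ∀ p,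
    (LRVSat σ (LRV.nextn n ψ) p ↔ p + n < σ.length ∧ LRVSat σ ψ (p + n)) := by
  intro n
  induction n with
  | zero => omega
  | succ m ih =>
    intro _ p
    simp only [LRV.nextn, LRVSat]
    rcases Nat.eq_zero_or_pos m with hm | hm
    · subst hm; simp [LRV.nextn]
    · rw [ih hm (p+1)]
      constructor
      · rintro ⟨h1, h2, h3⟩
        exact ⟨by omega, by rwa [show p+1+m = p+(m+1) by omega] at h3⟩
      · rintro ⟨h1, h2⟩
        exact ⟨by omega, by omega, by rwa [show p+(m+1) = p+1+m by omega] at h2⟩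

lemma sat_nextn_bdd {ψ : LRV} (hb : ∀ q, LRVSat σ ψ q → q < σ.length) :
    ∀ n p, LRVSat σ (LRV.nextn n ψ) p ↔ p + n < σ.length ∧ LRVSat σ ψ (p + n) := by
  intro n p
  rcases Nat.eq_zero_or_pos n with hn | hn
  · subst hn; simp only [LRV.nextn]
    exact ⟨fun h => ⟨by simpa using hb p h, h⟩, fun h => h.2⟩
  · exact sat_nextn_pos n hn p

lemma sat_nextn_top : ∀ n p, LRVSat σ (LRV.nextn n LRV.top) p ↔ p + n < σ.length := by
  intro n p
  rw [sat_nextn_bdd (fun q h => sat_top.mp h), sat_top]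
  tauto

lemma sat_prevn {ψ : LRV} : ∀ n p,
    LRVSat σ (LRV.prevn n ψ) p ↔ n ≤ p ∧ LRVSat σ ψ (p - n) := by
  intro n
  induction n with
  | zero => intro p; simp [LRV.prevn]
  | succ m ih =>
    intro p
    simp only [LRV.prevn, LRVSat, ih (p-1)]
    constructor
    · rintro ⟨h1, h2, h3⟩
      exact ⟨by omega, by rwa [show p - 1 - m = p - (m+1) by omega] at h3⟩
    · rintro ⟨h1, h2⟩
      exact ⟨by omega, by omega, by rwa [show p - (m+1) = p - 1 - m by omega] at h2⟩

lemma sat_bigAnd {l : List LRV} {p : ℕ} :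
    LRVSat σ (lrvBigAnd l) p ↔ p < σ.length ∧ ∀ ψ ∈ l, LRVSat σ ψ p := by
  induction l with
  | nil => simp [lrvBigAnd, sat_top]
  | cons a t ih =>
    simp only [lrvBigAnd, List.foldr_cons, LRVSat] at *
    rw [ih]
    simp only [List.mem_cons]
    constructor
    · rintro ⟨h1, h2, h3⟩
      exact ⟨h2, fun ψ h => h.elim (fun e => e ▸ h1) (h3 ψ)⟩
    · rintro ⟨h1, h2⟩
      exact ⟨h2 a (Or.inl rfl), h1, fun ψ h => h2 ψ (Or.inr h)⟩

lemma sat_alG {ψ : LRV} {i : ℕ} :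
    LRVSat σ (LRV.alG ψ) i ↔ ∀ j, i ≤ j → j < σ.length → LRVSat σ ψ j := by
  simp only [LRV.alG, LRV.evF, LRVSat]
  constructor
  · intro h j hij hjl
    by_contra hψ
    exact h ⟨j, hij, hjl, hψ, fun l _ hlj => sat_top.mpr (hlj.trans hjl)⟩
  · rintro H ⟨j, h1, h2, h3, -⟩
    exact h3 (H j h1 h2)

lemma sat_eqAt {a b p : ℕ} : LRVSat σ (eqAt a b) p ↔
    p + a < σ.length ∧ p + b < σ.length ∧ mval σ (p + a) 0 = mval σ (p + b) 0 := by
  have hb : ∀ (c : ℕ) q, LRVSat σ (LRV.eqX 0 c 0) q → q < σ.length := by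
    intro c q h
    simp only [LRVSat] at h
    omega
  rcases le_total a b with h | h
  · rw [eqAt, min_eq_left h, max_eq_right h, sat_nextn_bdd (hb _)]
    simp only [LRVSat]
    rw [show p + a + (b - a) = p + b by omega]
  · rw [eqAt, min_eq_right h, max_eq_left h, sat_nextn_bdd (hb _)]
    simp only [LRVSat]
    rw [show p + b + (a - b) = p + a by omega]
    constructor
    · rintro ⟨h1, h2, h3⟩; exact ⟨h2, h1, h3.symm⟩
    · rintro ⟨h1, h2, h3⟩; exact ⟨h2, h1, h3.symm⟩

end Aux
section Aux2

variable {σ : LRVModel}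

/-- Semantic content of `segF k` at position `q`. -/
def SegAt (σ : LRVModel) (k q : ℕ) : Prop :=
  (∀ j, j ≤ 2*k → (q + j < σ.length ∧ (mval σ q 0 = mval σ (q+j) 0 ↔ j % 2 = 0))) ∧
  (q + (2*k+1) < σ.length → mval σ q 0 = mval σ (q + (2*k+1)) 0)

lemma sat_segF {k q : ℕ} : LRVSat σ (segF k) q ↔ SegAt σ k q := by
  have hB : LRVSat σ (LRV.lor (.not (LRV.nextn (2*k+1) LRV.top)) (.eqX 0 (2*k+1) 0)) q ↔
      (q + (2*k+1) < σ.length → mval σ q 0 = mval σ (q+(2*k+1)) 0) := by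
    rw [sat_lor]
    simp only [LRVSat, sat_nextn_top]
    constructor
    · rintro (h | ⟨h1, h2⟩) hlt
      · exact (h (by omega)).elim
      · exact h2
    · intro h
      by_cases hlt : q + (2*k+1) < σ.length
      · exact Or.inr ⟨by omega, h hlt⟩
      · exact Or.inl (by intro hc; exact hlt (by omega))
  have hsplit : LRVSat σ (segF k) q ↔
      LRVSat σ (lrvBigAnd ((List.range (2 * k + 1)).map
        (fun j => if j % 2 = 0 then LRV.eqX 0 j 0 else LRV.neqX 0 j 0))) q ∧
      (q + (2*k+1) < σ.length → mval σ q 0 = mval σ (q+(2*k+1)) 0) := by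
    rw [← hB]; rfl
  rw [hsplit, sat_bigAnd]
  constructor
  · rintro ⟨⟨hq, hall⟩, h2⟩
    refine ⟨?_, h2⟩
    intro j hj
    have hmem : (if j % 2 = 0 then LRV.eqX 0 j 0 else LRV.neqX 0 j 0) ∈
        (List.range (2 * k + 1)).map
          (fun j => if j % 2 = 0 then LRV.eqX 0 j 0 else LRV.neqX 0 j 0) :=
      List.mem_map.mpr ⟨j, List.mem_range.mpr (by omega), rfl⟩
    have := hall _ hmem
    by_cases hpar : j % 2 = 0
    · rw [if_pos hpar] at this
      simp only [LRVSat] at this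
      exact ⟨this.1, by tauto⟩
    · rw [if_neg hpar] at this
      simp only [LRV.neqX, LRVSat, sat_nextn_top] at this
      refine ⟨this.2, ?_⟩
      constructor
      · intro he; exact absurd ⟨this.2, he⟩ this.1
      · intro h; omega
  · rintro ⟨h1, h2⟩
    have hq : q < σ.length := by have := (h1 0 (by omega)).1; omega
    refine ⟨⟨hq, ?_⟩, h2⟩
    intro ψ hmem
    rcases List.mem_map.mp hmem with ⟨j, hj, rfl⟩
    rw [List.mem_range] at hj
    have := h1 j (by omega)
    by_cases hpar : j % 2 = 0
    · rw [if_pos hpar]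
      simp only [LRVSat]
      exact ⟨this.1, this.2.mpr hpar⟩
    · rw [if_neg hpar]
      simp only [LRV.neqX, LRVSat, sat_nextn_top]
      refine ⟨?_, this.1⟩
      rintro ⟨-, he⟩
      exact hpar (this.2.mp he)

lemma off_lt {K r n N : ℕ} (hr : r < K) : n*K + r < N*K ↔ n < N := by
  constructor
  · intro h
    by_contra hc
    push_neg at hc
    have : N * K ≤ n * K := Nat.mul_le_mul_right K hc
    omega
  · intro h
    calc n*K + r < n*K + K := by omega
    _ = (n+1)*K := by ring
    _ ≤ N*K := Nat.mul_le_mul_right K h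

lemma off_lt_off {K r s n m : ℕ} (hr : r < K) (hs : s < K) :
    n*K + r < m*K + s ↔ (n < m ∨ (n = m ∧ r < s)) := by
  constructor
  · intro h
    rcases lt_trichotomy n m with h' | h' | h'
    · exact Or.inl h'
    · subst h'; right; exact ⟨rfl, by omega⟩
    · exfalso
      have : m*K + s < n*K + r := by
        calc m*K + s < m*K + K := by omega
        _ = (m+1)*K := by ring
        _ ≤ n*K := Nat.mul_le_mul_right K h'
        _ ≤ n*K + r := by omega
      omega
  · rintro (h | ⟨rfl, h⟩)
    · calc n*K + r < n*K + K := by omega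
      _ = (n+1)*K := by ring
      _ ≤ m*K := Nat.mul_le_mul_right K h
      _ ≤ m*K + s := by omega
    · omega

lemma off_eq {K r s n m : ℕ} (hr : r < K) (hs : s < K) (h : n*K + r = m*K + s) :
    n = m ∧ r = s := by
  have h1 := (off_lt_off hr hs (n := n) (m := m)).not.mp (by omega)
  have h2 := (off_lt_off hs hr (n := m) (m := n)).not.mp (by omega)
  push_neg at h1 h2
  omega

lemma mod_iff {K q c : ℕ} (hc : c < K) : q % K = c ↔ ∃ m, q = m*K + c := by
  constructor
  · intro h
    refine ⟨q / K, ?_⟩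
    have h1 := Nat.div_add_mod q K
    have h2 : K * (q / K) = (q / K) * K := Nat.mul_comm _ _
    omega
  · rintro ⟨m, rfl⟩
    rw [add_comm, Nat.add_mul_mod_self_right]
    exact Nat.mod_eq_of_lt hc

end Aux2
section Aux3

/-- Invariant linking a `k`-variable model `σ` and its one-variable encoding `σ'`. -/
structure Good (k : ℕ) (σ σ' : LRVModel) : Prop where
  hne : σ ≠ []
  hlen : σ'.length = σ.length * (2*k+1)
  hval : ∀ n i n' j, n < σ.length → n' < σ.length → i < k → j < k →
    (mval σ' (n*(2*k+1)+(2*i+1)) 0 = mval σ' (n'*(2*k+1)+(2*j+1)) 0 ↔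
      mval σ n i = mval σ n' j)
  hcons : ∀ p, p + 1 < σ'.length →
    (mval σ' p 0 = mval σ' (p+1) 0 ↔ p % (2*k+1) = 2*k)
  hseg : ∀ n, n < σ.length → SegAt σ' k (n*(2*k+1))

variable {k : ℕ} {σ σ' : LRVModel}

lemma Good.npos (G : Good k σ σ') : 0 < σ.length := List.length_pos_iff.mpr G.hne

lemma Good.seg_iff (G : Good k σ σ') {q : ℕ} (hq : q < σ'.length) :
    SegAt σ' k q ↔ ∃ m, m < σ.length ∧ q = m*(2*k+1) := by
  constructor
  · intro hS
    have hdm := Nat.div_add_mod q (2*k+1)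
    have hcm : (2*k+1) * (q / (2*k+1)) = (q / (2*k+1)) * (2*k+1) := Nat.mul_comm _ _
    have hmlt : q % (2*k+1) < 2*k+1 := Nat.mod_lt _ (by omega)
    by_cases ho : q % (2*k+1) = 0
    · refine ⟨q / (2*k+1), ?_, by omega⟩
      have hq' : (q / (2*k+1))*(2*k+1) + 0 < σ.length * (2*k+1) := by
        rw [G.hlen] at hq; omega
      exact (off_lt (by omega)).mp hq'
    · exfalso
      set b := 2*k - q % (2*k+1) with hb
      have h1 := hS.1 b (by omega)
      have h2 := hS.1 (b+1) (by omega)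
      have hmod : (q + b) % (2*k+1) = 2*k := by
        rw [mod_iff (by omega)]
        exact ⟨q / (2*k+1), by omega⟩
      have heq : mval σ' (q+b) 0 = mval σ' (q+b+1) 0 :=
        (G.hcons (q+b) (by have := h2.1; omega)).mpr hmod
      rw [show q + (b+1) = q + b + 1 by omega] at h2
      by_cases hpar : b % 2 = 0
      · have e1 : mval σ' q 0 = mval σ' (q+b) 0 := h1.2.mpr hpar
        have e2 : ¬ (mval σ' q 0 = mval σ' (q+b+1) 0) := by
          intro hc; have := h2.2.mp hc; omega
        exact e2 (e1.trans heq)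
      · have e1 : mval σ' q 0 = mval σ' (q+b+1) 0 := h2.2.mpr (by omega)
        have e2 : ¬ (mval σ' q 0 = mval σ' (q+b) 0) := by
          intro hc; have := h1.2.mp hc; omega
        exact e2 (e1.trans heq.symm)
  · rintro ⟨m, hm, rfl⟩
    exact G.hseg m hm

lemma Good.sat_seg_iff (G : Good k σ σ') {q : ℕ} (hq : q < σ'.length) :
    LRVSat σ' (segF k) q ↔ ∃ m, m < σ.length ∧ q = m*(2*k+1) :=
  sat_segF.trans (G.seg_iff hq)

lemma Good.gam_iff (G : Good k σ σ') {q j : ℕ} (hq : q < σ'.length) (hj : j < k) :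
    LRVSat σ' (gamF k (j+1)) q ↔ ∃ m, m < σ.length ∧ q = m*(2*k+1) + (2*j+1) := by
  have hbnd : ∀ p, LRVSat σ' (LRV.eqX 0 1 0) p → p < σ'.length := by
    intro p hp; simp only [LRVSat] at hp; omega
  simp only [gamF]
  rw [sat_lor, sat_nextn_bdd hbnd]
  set d := 2*k+1 - 2*(j+1) with hdd
  have hd : d + (2*j+1) = 2*k := by omega
  simp only [LRVSat, sat_nextn_top]
  have hKle : (2*k+1) ≤ σ.length * (2*k+1) := by
    have := Nat.mul_le_mul_right (2*k+1) G.npos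
    omega
  have hsub : (σ.length - 1) * (2*k+1) + (2*k+1) = σ.length * (2*k+1) := by
    have h := tsub_mul σ.length 1 (2*k+1)
    rw [one_mul] at h
    omega
  constructor
  · rintro (⟨h1, h2, h3⟩ | ⟨h1, h2⟩)
    · have hm := (G.hcons _ h2).mp h3
      rw [mod_iff (by omega)] at hm
      obtain ⟨m, hm⟩ := hm
      have hq' : q = m*(2*k+1) + (2*j+1) := by omega
      refine ⟨m, ?_, hq'⟩
      have hlt : m*(2*k+1) + (2*j+1) < σ.length * (2*k+1) := by
        rw [G.hlen] at hq; omega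
      exact (off_lt (by omega)).mp hlt
    · have h2' : ¬ (q + d + 1 < σ'.length) := by
        intro hc; exact h2 (by omega)
      rw [G.hlen] at h1 h2' hq
      have hN := G.npos
      refine ⟨σ.length - 1, by omega, by omega⟩
  · rintro ⟨m, hm, rfl⟩
    have hlt1 : m*(2*k+1) + 2*k < σ.length * (2*k+1) := (off_lt (by omega)).mpr hm
    have hqd : m*(2*k+1) + (2*j+1) + d = m*(2*k+1) + 2*k := by omega
    have hd1 : m*(2*k+1) + (2*j+1) + d < σ'.length := by rw [G.hlen]; omega
    by_cases h2 : m*(2*k+1) + (2*j+1) + d + 1 < σ'.length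
    · left
      refine ⟨hd1, h2, (G.hcons _ h2).mpr ?_⟩
      rw [mod_iff (by omega)]
      exact ⟨m, by omega⟩
    · right
      refine ⟨hd1, ?_⟩
      intro hc
      exact h2 (by omega)

lemma Good.xi_iff (G : Good k σ σ') {n i j : ℕ} (hn : n < σ.length) (hi : i < k)
    (hj : j < k) :
    LRVSat σ' (xiF k (i+1) (j+1)) (n*(2*k+1)) ↔
      ∃ m, m < σ.length ∧ n*(2*k+1) + (2*i+1) < m*(2*k+1) + (2*j+1) ∧
        mval σ n i = mval σ m j := by
  have h2i : 2*(i+1)-1 = 2*i+1 := by omega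
  simp only [xiF, h2i]
  have hbnd : ∀ q, LRVSat σ' (.futEq 0 0 (gamF k (j+1))) q → q < σ'.length := by
    rintro q ⟨m, h1, h2, _⟩; omega
  rw [sat_nextn_bdd hbnd]
  simp only [LRVSat]
  constructor
  · rintro ⟨hp, q, hq1, hq2, hq3, hq4⟩
    obtain ⟨m, hm, rfl⟩ := (G.gam_iff hq2 hj).mp hq4
    exact ⟨m, hm, hq1, (G.hval n i m j hn hm hi hj).mp hq3⟩
  · rintro ⟨m, hm, hlt, heq⟩
    have hplen : n*(2*k+1)+(2*i+1) < σ'.length := by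
      rw [G.hlen]; exact (off_lt (by omega)).mpr hn
    have hqlen : m*(2*k+1)+(2*j+1) < σ'.length := by
      rw [G.hlen]; exact (off_lt (by omega)).mpr hm
    exact ⟨hplen, m*(2*k+1)+(2*j+1), hlt, hqlen,
      (G.hval n i m j hn hm hi hj).mpr heq, (G.gam_iff hqlen hj).mpr ⟨m, hm, rfl⟩⟩

end Aux3
section Corr

variable {k : ℕ} {σ σ' : LRVModel}

lemma sat_andC {a b : LRV} {p : ℕ} :
    LRVSat σ (.and a b) p ↔ (LRVSat σ a p ∧ LRVSat σ b p) := Iff.rfl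
lemma sat_notC {a : LRV} {p : ℕ} : LRVSat σ (.not a) p ↔ ¬ LRVSat σ a p := Iff.rfl
lemma sat_eqXC {x j y i : ℕ} : LRVSat σ (.eqX x j y) i ↔
    (i + j < σ.length ∧ mval σ i x = mval σ (i+j) y) := Iff.rfl
lemma sat_futEqC {x y : ℕ} {φ : LRV} {i : ℕ} : LRVSat σ (.futEq x y φ) i ↔
    ∃ j, i < j ∧ j < σ.length ∧ mval σ i x = mval σ j y ∧ LRVSat σ φ j := Iff.rfl
lemma sat_untlC {a b : LRV} {i : ℕ} : LRVSat σ (.untl a b) i ↔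
    ∃ j, i ≤ j ∧ j < σ.length ∧ LRVSat σ b j ∧
      ∀ l, i ≤ l → l < j → LRVSat σ a l := Iff.rfl
lemma sat_sincC {a b : LRV} {i : ℕ} : LRVSat σ (.sinc a b) i ↔
    ∃ j, j ≤ i ∧ LRVSat σ b j ∧ ∀ l, j < l → l ≤ i → LRVSat σ a l := Iff.rfl
lemma sat_prevC {a : LRV} {p : ℕ} :
    LRVSat σ (.prev a) p ↔ (0 < p ∧ LRVSat σ a (p-1)) := Iff.rfl
lemma sat_nextC {a : LRV} {p : ℕ} :
    LRVSat σ (.next a) p ↔ (p + 1 < σ.length ∧ LRVSat σ a (p+1)) := Iff.rfl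

lemma Good.fit (G : Good k σ σ') {m r : ℕ} (hm : m < σ.length) (hr : r < 2*k+1) :
    m*(2*k+1) + r < σ'.length := by
  rw [G.hlen]; exact (off_lt hr).mpr hm

lemma Good.fit0 (G : Good k σ σ') {m : ℕ} (hm : m < σ.length) :
    m*(2*k+1) < σ'.length := by
  have := G.fit hm (show 0 < 2*k+1 by omega)
  omega

lemma Good.unfit (G : Good k σ σ') {m r : ℕ} (h : m*(2*k+1) + r < σ'.length)
    (hr : r < 2*k+1) : m < σ.length := by
  rw [G.hlen] at h; exact (off_lt hr).mp h

lemma Good.unfit0 (G : Good k σ σ') {m : ℕ} (h : m*(2*k+1) < σ'.length) :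
    m < σ.length :=
  G.unfit (r := 0) (by omega) (by omega)

lemma good_corr (G : Good k σ σ') :
    ∀ ψ : SrcF k, ∀ n, n < σ.length →
      (LRVSat σ' (trOne ψ) (n*(2*k+1)) ↔ LRVSat σ ψ.toLRV n) := by
  intro ψ
  induction ψ with
  | eq i l j =>
    intro n hn
    have hi : (i:ℕ) < k := i.isLt
    have hj : (j:ℕ) < k := j.isLt
    simp only [trOne, SrcF.toLRV]
    rw [sat_eqAt, sat_eqXC,
      show n*(2*k+1) + (l*(2*k+1) + 2*(j:ℕ) + 1) = (n+l)*(2*k+1) + (2*(j:ℕ)+1) by ring]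
    constructor
    · rintro ⟨h1, h2, h3⟩
      have hnl : n + l < σ.length := G.unfit h2 (by omega)
      exact ⟨hnl, (G.hval n i (n+l) j hn hnl hi hj).mp h3⟩
    · rintro ⟨hnl, h3⟩
      exact ⟨G.fit hn (by omega), G.fit hnl (by omega),
        (G.hval n i (n+l) j hn hnl hi hj).mpr h3⟩
  | neq i l j =>
    intro n hn
    have hi : (i:ℕ) < k := i.isLt
    have hj : (j:ℕ) < k := j.isLt
    simp only [trOne, SrcF.toLRV, LRV.neqX]
    rw [sat_andC, sat_andC, sat_notC, sat_notC, sat_eqAt, sat_eqXC,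
      sat_nextn_top, sat_nextn_top,
      show n*(2*k+1) + (l*(2*k+1) + 2*(j:ℕ) + 1) = (n+l)*(2*k+1) + (2*(j:ℕ)+1) by ring]
    constructor
    · rintro ⟨hne, h2⟩
      have hnl : n + l < σ.length := G.unfit h2 (by omega)
      refine ⟨?_, hnl⟩
      rintro ⟨-, he⟩
      exact hne ⟨G.fit hn (by omega), h2,
        (G.hval n i (n+l) j hn hnl hi hj).mpr he⟩
    · rintro ⟨hne, hnl⟩
      refine ⟨?_, G.fit hnl (by omega)⟩
      rintro ⟨h1, h2, h3⟩
      exact hne ⟨hnl, (G.hval n i (n+l) j hn hnl hi hj).mp h3⟩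
  | oblig i j =>
    intro n hn
    have hi : (i:ℕ) < k := i.isLt
    have hj : (j:ℕ) < k := j.isLt
    have hEq : LRVSat σ' (eqAt (2*(i:ℕ)+1) (2*(j:ℕ)+1)) (n*(2*k+1)) ↔
        mval σ n i = mval σ n j := by
      rw [sat_eqAt]
      constructor
      · rintro ⟨-, -, h⟩; exact (G.hval n i n j hn hn hi hj).mp h
      · intro h
        exact ⟨G.fit hn (by omega), G.fit hn (by omega),
          (G.hval n i n j hn hn hi hj).mpr h⟩
    have hXjj := G.xi_iff hn hj hj
    have hXij := G.xi_iff hn hi hj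
    simp only [trOne, SrcF.toLRV]
    rw [sat_lor, sat_andC, sat_andC, sat_andC, sat_notC, sat_futEqC]
    rw [hEq, hXjj, hXij, sat_nextn_top]
    simp only [sat_top]
    constructor
    · rintro (⟨hE, m, hm, hlt, heq⟩ | ⟨⟨hE, -⟩, m, hm, hlt, heq⟩)
      · have hnm : n < m := by
          rcases (off_lt_off (by omega) (by omega)).mp hlt with h | ⟨h, h2⟩
          · exact h
          · omega
        exact ⟨m, hnm, hm, hE.trans heq, hm⟩
      · rcases (off_lt_off (by omega) (by omega)).mp hlt with h | ⟨rfl, h2⟩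
        · exact ⟨m, h, hm, heq, hm⟩
        · exact absurd heq hE
    · rintro ⟨m, hnm, hm, heq, -⟩
      by_cases hE : mval σ n i = mval σ n j
      · left
        refine ⟨hE, m, hm, ?_, hE.symm.trans heq⟩
        exact (off_lt_off (by omega) (by omega)).mpr (Or.inl hnm)
      · right
        refine ⟨⟨hE, G.fit hn (by omega)⟩, m, hm, ?_, heq⟩
        exact (off_lt_off (by omega) (by omega)).mpr (Or.inl hnm)
  | and a b iha ihb =>
    intro n hn
    simp only [trOne, SrcF.toLRV]
    rw [sat_andC, sat_andC, iha n hn, ihb n hn]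
  | not a ih =>
    intro n hn
    simp only [trOne, SrcF.toLRV]
    rw [sat_notC, sat_notC, ih n hn]
  | next a ih =>
    intro n hn
    simp only [trOne, SrcF.toLRV]
    rw [sat_nextn_pos (2*k+1) (by omega), sat_nextC,
      show n*(2*k+1) + (2*k+1) = (n+1)*(2*k+1) by ring]
    constructor
    · rintro ⟨h1, h2⟩
      have hn1 : n + 1 < σ.length := G.unfit0 h1
      exact ⟨hn1, (ih (n+1) hn1).mp h2⟩
    · rintro ⟨hn1, h2⟩
      exact ⟨G.fit0 hn1, (ih (n+1) hn1).mpr h2⟩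
  | prev a ih =>
    intro n hn
    simp only [trOne, SrcF.toLRV]
    rw [sat_prevn, sat_prevC,
      show n*(2*k+1) - (2*k+1) = (n-1)*(2*k+1) by rw [tsub_mul, one_mul]]
    constructor
    · rintro ⟨h1, h2⟩
      have hn0 : 0 < n := by
        rcases Nat.eq_zero_or_pos n with h | h
        · subst h; simp at h1
        · exact h
      exact ⟨hn0, (ih (n-1) (by omega)).mp h2⟩
    · rintro ⟨h1, h2⟩
      refine ⟨?_, (ih (n-1) (by omega)).mpr h2⟩
      have := Nat.mul_le_mul_right (2*k+1) h1
      omega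
  | untl a b iha ihb =>
    intro n hn
    simp only [trOne, SrcF.toLRV]
    rw [sat_untlC, sat_untlC]
    simp only [sat_andC, sat_limp]
    constructor
    · rintro ⟨q, hq1, hq2, ⟨hqs, hqb⟩, hall⟩
      obtain ⟨m, hm, rfl⟩ := (G.sat_seg_iff hq2).mp hqs
      have hnm : n ≤ m := le_of_mul_le_mul_right hq1 (by omega)
      refine ⟨m, hnm, hm, (ihb m hm).mp hqb, ?_⟩
      intro l hnl hlm
      have hlK : l*(2*k+1) < m*(2*k+1) :=
        (mul_lt_mul_iff_left₀ (show (0:ℕ) < 2*k+1 by omega)).mpr hlm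
      have hlm' : l < σ.length := lt_trans hlm hm
      refine (iha l hlm').mp (hall (l*(2*k+1)) (Nat.mul_le_mul_right _ hnl) hlK ?_)
      exact (G.sat_seg_iff (lt_trans hlK hq2)).mpr ⟨l, hlm', rfl⟩
    · rintro ⟨m, hnm, hm, hb, hall⟩
      have hmlen : m*(2*k+1) < σ'.length := G.fit0 hm
      refine ⟨m*(2*k+1), Nat.mul_le_mul_right _ hnm, hmlen,
        ⟨(G.sat_seg_iff hmlen).mpr ⟨m, hm, rfl⟩, (ihb m hm).mpr hb⟩, ?_⟩
      intro l hl1 hl2 hls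
      obtain ⟨m', hm', rfl⟩ := (G.sat_seg_iff (lt_trans hl2 hmlen)).mp hls
      have h1 : n ≤ m' := le_of_mul_le_mul_right hl1 (by omega)
      have h2 : m' < m := (mul_lt_mul_iff_left₀ (show (0:ℕ) < 2*k+1 by omega)).mp hl2
      exact (iha m' hm').mpr (hall m' h1 h2)
  | sinc a b iha ihb =>
    intro n hn
    simp only [trOne, SrcF.toLRV]
    rw [sat_sincC, sat_sincC]
    simp only [sat_andC, sat_limp]
    constructor
    · rintro ⟨q, hq1, ⟨hqs, hqb⟩, hall⟩
      have hqlen : q < σ'.length := lt_of_le_of_lt hq1 (G.fit0 hn)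
      obtain ⟨m, hm, rfl⟩ := (G.sat_seg_iff hqlen).mp hqs
      have hmn : m ≤ n := le_of_mul_le_mul_right hq1 (by omega)
      refine ⟨m, hmn, (ihb m hm).mp hqb, ?_⟩
      intro l hml hln
      have hl : l < σ.length := lt_of_le_of_lt hln hn
      have h1 : m*(2*k+1) < l*(2*k+1) :=
        (mul_lt_mul_iff_left₀ (show (0:ℕ) < 2*k+1 by omega)).mpr hml
      have h2 : l*(2*k+1) ≤ n*(2*k+1) := Nat.mul_le_mul_right _ hln
      exact (iha l hl).mp (hall (l*(2*k+1)) h1 h2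
        ((G.sat_seg_iff (G.fit0 hl)).mpr ⟨l, hl, rfl⟩))
    · rintro ⟨m, hmn, hb, hall⟩
      have hm : m < σ.length := lt_of_le_of_lt hmn hn
      refine ⟨m*(2*k+1), Nat.mul_le_mul_right _ hmn,
        ⟨(G.sat_seg_iff (G.fit0 hm)).mpr ⟨m, hm, rfl⟩, (ihb m hm).mpr hb⟩, ?_⟩
      intro l hl1 hl2 hls
      have hllen : l < σ'.length := lt_of_le_of_lt hl2 (G.fit0 hn)
      obtain ⟨m', hm', rfl⟩ := (G.sat_seg_iff hllen).mp hls
      have h1 : m < m' := (mul_lt_mul_iff_left₀ (show (0:ℕ) < 2*k+1 by omega)).mp hl1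
      have h2 : m' ≤ n := le_of_mul_le_mul_right hl2 (by omega)
      exact (iha m' hm').mpr (hall m' h1 h2)

end Corr
section Encode

variable {k : ℕ} {σ : LRVModel}

/-- Value of the single variable at offset `o` of segment `n`. -/
def segval (σ : LRVModel) (n o : ℕ) : ℕ :=
  if o % 2 = 0 then 0 else mval σ n (o/2) + 1

/-- One-variable encoding of a `k`-variable model. -/
def encode (σ : LRVModel) (k : ℕ) : LRVModel :=
  (List.range (σ.length * (2*k+1))).map
    (fun p => fun _ => segval σ (p/(2*k+1)) (p%(2*k+1)))

lemma encode_len : (encode σ k).length = σ.length*(2*k+1) := by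
  simp [encode]

lemma encode_val {p : ℕ} (hp : p < σ.length*(2*k+1)) :
    mval (encode σ k) p 0 = segval σ (p/(2*k+1)) (p%(2*k+1)) := by
  simp only [encode, mval]
  rw [List.getD_eq_getElem?_getD, List.getElem?_map, List.getElem?_range hp]
  rfl

lemma encode_at {n o : ℕ} (hn : n < σ.length) (ho : o < 2*k+1) :
    mval (encode σ k) (n*(2*k+1)+o) 0 = segval σ n o := by
  rw [encode_val ((off_lt ho).mpr hn)]
  congr 1
  · rw [mul_comm, Nat.mul_add_div (by omega), Nat.div_eq_of_lt ho, add_zero]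
  · rw [mul_comm, Nat.mul_add_mod, Nat.mod_eq_of_lt ho]

lemma segval_even {n o : ℕ} (h : o % 2 = 0) : segval σ n o = 0 := by
  simp [segval, h]

lemma segval_odd {n o : ℕ} (h : o % 2 = 1) : segval σ n o = mval σ n (o/2) + 1 := by
  simp [segval, h]

lemma encode_at0 {n : ℕ} (hn : n < σ.length) :
    mval (encode σ k) (n*(2*k+1)) 0 = 0 := by
  have h := encode_at (k := k) (o := 0) hn (by omega)
  rw [add_zero] at h
  rw [h, segval_even (by omega)]

lemma good_encode (hne : σ ≠ []) : Good k σ (encode σ k) := by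
  have hN : 0 < σ.length := List.length_pos_iff.mpr hne
  refine ⟨hne, encode_len, ?_, ?_, ?_⟩
  · intro n i n' j hn hn' hi hj
    rw [encode_at hn (by omega), encode_at hn' (by omega),
      segval_odd (by omega), segval_odd (by omega),
      show (2*i+1)/2 = i by omega, show (2*j+1)/2 = j by omega]
    omega
  · intro p hp
    rw [encode_len] at hp
    have hdm := Nat.div_add_mod p (2*k+1)
    have hcm : (2*k+1)*(p/(2*k+1)) = (p/(2*k+1))*(2*k+1) := Nat.mul_comm _ _
    have hmlt : p % (2*k+1) < 2*k+1 := Nat.mod_lt _ (by omega)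
    set n := p/(2*k+1) with hndef
    set o := p%(2*k+1) with hodef
    have hplt : p < σ.length * (2*k+1) := by omega
    have hnlt : n < σ.length := by
      have h1 : n*(2*k+1) + o < σ.length * (2*k+1) := by omega
      exact (off_lt hmlt).mp h1
    by_cases ho : o < 2*k
    · have hp1 : p + 1 = n*(2*k+1) + (o+1) := by omega
      have hp0 : p = n*(2*k+1) + o := by omega
      rw [hp1, hp0, encode_at hnlt (by omega), encode_at hnlt (by omega)]
      by_cases hpar : o % 2 = 0
      · rw [segval_even hpar, segval_odd (by omega)]
        omega
      · rw [segval_odd (by omega), segval_even (by omega)]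
        omega
    · have hoeq : o = 2*k := by omega
      have hmul : (n+1)*(2*k+1) = n*(2*k+1) + (2*k+1) := by ring
      have hp1 : p + 1 = (n+1)*(2*k+1) := by omega
      have hp0 : p = n*(2*k+1) + 2*k := by omega
      have hn1 : n + 1 < σ.length := by
        have h1 : (n+1)*(2*k+1) + 0 < σ.length * (2*k+1) := by omega
        exact (off_lt (show (0:ℕ) < 2*k+1 by omega)).mp h1
      rw [hp1, hp0, encode_at hnlt (by omega), segval_even (by omega), encode_at0 hn1]
      omega
  · intro n hn
    constructor
    · intro j hj
      refine ⟨by rw [encode_len]; exact (off_lt (by omega)).mpr hn, ?_⟩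
      rw [encode_at0 hn, encode_at hn (by omega)]
      by_cases hpar : j % 2 = 0
      · rw [segval_even hpar]
        omega
      · rw [segval_odd (by omega)]
        omega
    · intro hlt
      have hmul : (n+1)*(2*k+1) = n*(2*k+1) + (2*k+1) := by ring
      rw [encode_len] at hlt
      have hn1 : n + 1 < σ.length := by
        have h1 : (n+1)*(2*k+1) + 0 < σ.length * (2*k+1) := by omega
        exact (off_lt (show (0:ℕ) < 2*k+1 by omega)).mp h1
      rw [encode_at0 hn, show n*(2*k+1) + (2*k+1) = (n+1)*(2*k+1) by ring,
        encode_at0 hn1]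

lemma good_manySeg {σ' : LRVModel} (G : Good k σ σ') : LRVSat σ' (manySegF k) 0 := by
  have h0 : (0:ℕ)*(2*k+1) = 0 := by ring
  have hlen0 : 0 < σ'.length := by
    have := G.fit0 G.npos (m := 0)
    omega
  simp only [manySegF]
  rw [sat_andC]
  constructor
  · exact (G.sat_seg_iff hlen0).mpr ⟨0, G.npos, h0.symm⟩
  · rw [sat_alG]
    intro q h0q hq
    rw [sat_limp]
    intro he
    rw [sat_eqXC] at he
    rw [sat_nextC]
    refine ⟨he.1, ?_⟩
    have hm := (G.hcons q he.1).mp he.2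
    have hdm := Nat.div_add_mod q (2*k+1)
    have hcm : (2*k+1)*(q/(2*k+1)) = (q/(2*k+1))*(2*k+1) := Nat.mul_comm _ _
    have hq1 : q+1 = (q/(2*k+1)+1)*(2*k+1) := by
      have : (q/(2*k+1)+1)*(2*k+1) = (q/(2*k+1))*(2*k+1) + (2*k+1) := by ring
      omega
    refine (G.sat_seg_iff he.1).mpr ⟨q/(2*k+1)+1, ?_, hq1⟩
    exact G.unfit0 (by rw [← hq1]; exact he.1)

end Encode
section Decode

variable {k : ℕ} {σ' : LRVModel}

lemma good_decode (hne' : σ' ≠ []) (hms : LRVSat σ' (manySegF k) 0) :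
    ∃ σ : LRVModel, Good k σ σ' := by
  simp only [manySegF] at hms
  rw [sat_andC] at hms
  obtain ⟨hseg0, hG⟩ := hms
  have S0 : SegAt σ' k 0 := sat_segF.mp hseg0
  rw [sat_alG] at hG
  have hG' : ∀ q, q < σ'.length → q + 1 < σ'.length →
      mval σ' q 0 = mval σ' (q+1) 0 → SegAt σ' k (q+1) := by
    intro q hq hq1 he
    have h := sat_limp.mp (hG q (Nat.zero_le _) hq)
    rw [sat_eqXC, sat_nextC] at h
    exact sat_segF.mp (h ⟨hq1, he⟩).2
  -- every segment start in range satisfies SegAt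
  have chain : ∀ n, n*(2*k+1) < σ'.length → SegAt σ' k (n*(2*k+1)) := by
    intro n
    induction n with
    | zero => intro _; rw [zero_mul]; exact S0
    | succ m ih =>
      intro hlt
      have hmul : (m+1)*(2*k+1) = m*(2*k+1) + (2*k+1) := by ring
      have hm : m*(2*k+1) < σ'.length := by omega
      have hS := ih hm
      have h2k := hS.1 (2*k) (le_refl _)
      have heq2k : mval σ' (m*(2*k+1)) 0 = mval σ' (m*(2*k+1)+2*k) 0 :=
        h2k.2.mpr (by omega)
      have hq1X : m*(2*k+1) + (2*k+1) < σ'.length := by omega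
      have hbd : mval σ' (m*(2*k+1)) 0 = mval σ' (m*(2*k+1)+(2*k+1)) 0 := hS.2 hq1X
      have hcc : mval σ' (m*(2*k+1)+2*k) 0 = mval σ' (m*(2*k+1)+2*k+1) 0 := by
        rw [show m*(2*k+1)+2*k+1 = m*(2*k+1)+(2*k+1) by omega]
        exact heq2k.symm.trans hbd
      have hres := hG' (m*(2*k+1)+2*k) (by omega) (by omega) hcc
      rw [show m*(2*k+1)+2*k+1 = (m+1)*(2*k+1) by omega] at hres
      exact hres
  -- the length is a multiple of 2k+1
  have hlp : 0 < σ'.length := List.length_pos_iff.mpr hne'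
  have hdm := Nat.div_add_mod σ'.length (2*k+1)
  have hcm : (2*k+1)*(σ'.length/(2*k+1)) = (σ'.length/(2*k+1))*(2*k+1) :=
    Nat.mul_comm _ _
  have hmlt : σ'.length % (2*k+1) < 2*k+1 := Nat.mod_lt _ (by omega)
  set N := σ'.length/(2*k+1) with hNdef
  have hNlen : σ'.length = N*(2*k+1) := by
    by_contra hr
    have hr0 : σ'.length % (2*k+1) ≠ 0 := by omega
    have hlt : N*(2*k+1) < σ'.length := by omega
    have hS := chain N hlt
    have h1 := (hS.1 (2*k) (le_refl _)).1
    omega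
  have hNpos : 0 < N := by
    rcases Nat.eq_zero_or_pos N with h | h
    · rw [h, zero_mul] at hNlen; omega
    · exact h
  refine ⟨(List.range N).map (fun n => fun v => mval σ' (n*(2*k+1) + (2*v+1)) 0),
    ?_, ?_, ?_, ?_, ?_⟩
  · -- nonempty
    apply List.ne_nil_of_length_pos
    rw [List.length_map, List.length_range]
    exact hNpos
  · -- length
    simp [hNlen]
  · -- hval
    intro n i n' j hn hn' hi hj
    simp only [List.length_map, List.length_range] at hn hn'
    have hv : ∀ m v, m < N →
        mval ((List.range N).map (fun n => fun v => mval σ' (n*(2*k+1) + (2*v+1)) 0)) m v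
          = mval σ' (m*(2*k+1) + (2*v+1)) 0 := by
      intro m v hm
      simp only [mval]
      rw [List.getD_eq_getElem?_getD, List.getElem?_map, List.getElem?_range hm]
      rfl
    rw [hv n i hn, hv n' j hn']
  · -- hcons
    intro p hp
    have hdm2 := Nat.div_add_mod p (2*k+1)
    have hcm2 : (2*k+1)*(p/(2*k+1)) = (p/(2*k+1))*(2*k+1) := Nat.mul_comm _ _
    have hmlt2 : p % (2*k+1) < 2*k+1 := Nat.mod_lt _ (by omega)
    set n := p/(2*k+1) with hndef
    set o := p%(2*k+1) with hodef
    have hnK : n*(2*k+1) < σ'.length := by omega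
    have hS := chain n hnK
    by_cases ho : o < 2*k
    · have h1 := hS.1 o (by omega)
      have h2 := hS.1 (o+1) (by omega)
      rw [show p = n*(2*k+1) + o by omega] at hp ⊢
      rw [show n*(2*k+1) + o + 1 = n*(2*k+1) + (o+1) by omega]
      constructor
      · intro he
        exfalso
        by_cases hpar : o % 2 = 0
        · have e1 := h1.2.mpr hpar
          have e2 : ¬ (mval σ' (n*(2*k+1)) 0 = mval σ' (n*(2*k+1)+(o+1)) 0) := by
            intro hc
            have := h2.2.mp hc
            omega
          exact e2 (e1.trans he)
        · have e1 := h2.2.mpr (by omega)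
          have e2 : ¬ (mval σ' (n*(2*k+1)) 0 = mval σ' (n*(2*k+1)+o) 0) := by
            intro hc
            have := h1.2.mp hc
            omega
          exact e2 (e1.trans he.symm)
      · intro h; omega
    · have hoeq : o = 2*k := by omega
      have hmul : (n+1)*(2*k+1) = n*(2*k+1) + (2*k+1) := by ring
      have hp1lt : n*(2*k+1) + (2*k+1) < σ'.length := by omega
      have hbd := hS.2 hp1lt
      have h2k := hS.1 (2*k) (le_refl _)
      have heq2k := h2k.2.mpr (by omega)
      rw [show p = n*(2*k+1) + 2*k by omega,
        show n*(2*k+1) + 2*k + 1 = n*(2*k+1) + (2*k+1) by omega]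
      constructor
      · intro _; omega
      · intro _
        exact heq2k.symm.trans hbd
  · -- hseg
    intro n hn
    simp only [List.length_map, List.length_range] at hn
    exact chain n (by rw [hNlen]; exact (off_lt (r := 0) (by omega)).mpr hn |>.trans_le (by omega))

end Decode

/-- An LRV formula φ over `x_1, …, x_k` with atomic formulas of the forms
`x_i ≈ X^ℓ x_j`, `x_i ≉ X^ℓ x_j` and `⟨x_i ≈ x_j? ⊤⟩` is satisfiable iff the one-variable
LRV formula `many-segments ∧ tr(φ)` is satisfiable. -/
theorem lrv_to_one_variable {k : ℕ} (φ : SrcF k) :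
    LRVSatisfiable φ.toLRV ↔ LRVSatisfiable (.and (manySegF k) (trOne φ)) := by
  constructor
  · rintro ⟨σ, hne, hsat⟩
    have G := good_encode (k := k) hne
    refine ⟨encode σ k, ?_, ?_⟩
    · apply List.ne_nil_of_length_pos
      rw [encode_len]
      exact Nat.mul_pos (List.length_pos_iff.mpr hne) (by omega)
    · rw [sat_andC]
      refine ⟨good_manySeg G, ?_⟩
      have h := (good_corr G φ 0 G.npos).mpr hsat
      rwa [zero_mul] at h
  · rintro ⟨σ', hne', hsat'⟩
    rw [sat_andC] at hsat'
    obtain ⟨hms, htr⟩ := hsat'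
    obtain ⟨σ, G⟩ := good_decode hne' hms
    refine ⟨σ, G.hne, ?_⟩
    have h := good_corr G φ 0 G.npos
    rw [zero_mul] at h
    exact h.mp htr
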